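/- Let K ⊂ ℝ^p ∖ {0} and L ⊂ ℝ^q ∖ {0} be compact sets such that each ray from the origin meets K (respectively L) in at most one point, and suppose K is regular. If f : K → L is a Lipschitz map, then the map f' : OpenCone(K) → OpenCone(L) defined by f'(t·k) = t·f(k) for t ≥ 0, k ∈ K, is Lipschitz. In particular, if f : K → L is a bi-Lipschitz homeomorphism of regular sets, then f' is a bi-Lipschitz homeomorphism. -/

import Mathlib

/-- The open cone over a set `K ⊂ ℝ^p`: all nonnegative multiples of points of `K`. -/
def OpenCone {p : ℕ} (K : Set (EuclideanSpace ℝ (Fin p))) : Set (EuclideanSpace ℝ (Fin p)) :=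
  {y | ∃ t : ℝ, 0 ≤ t ∧ ∃ k ∈ K, y = t • k}

/-- Each ray from the origin meets `K` in at most one point. -/
def RayUnique {p : ℕ} (K : Set (EuclideanSpace ℝ (Fin p))) : Prop :=
  ∀ k₁ ∈ K, ∀ k₂ ∈ K, ∀ t : ℝ, 0 < t → k₂ = t • k₁ → k₂ = k₁

/-- `K` is *regular*: every `x ∈ K` has a closed neighborhood `A` in `K` and `α > 0` such
that every normalized "tangent" vector `(v-w)/‖v-w‖`, `v ≠ w ∈ A`, is at distance `> α`
from every positive multiple `t·x/‖x‖`. -/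
def RegularSet {p : ℕ} (K : Set (EuclideanSpace ℝ (Fin p))) : Prop :=
  ∀ x ∈ K, ∃ A : Set (EuclideanSpace ℝ (Fin p)),
    A ⊆ K ∧ IsClosed A ∧ A ∈ nhdsWithin x K ∧
    ∃ α > (0 : ℝ), ∀ v ∈ A, ∀ w ∈ A, v ≠ w → ∀ t : ℝ, 0 < t →
      α < ‖(‖v - w‖⁻¹ • (v - w)) - t • (‖x‖⁻¹ • x)‖

open Metric Set





section helpers
variable {E : Type*} [NormedAddCommGroup E] [InnerProductSpace ℝ E]

lemma proj_le (u y : E) (hu : ‖u‖ = 1) : ‖y - (inner ℝ y u : ℝ) • u‖ ≤ ‖y‖ := by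
  have h : ‖y - (inner ℝ y u : ℝ) • u‖ ^ 2 = ‖y‖ ^ 2 - (inner ℝ y u : ℝ) ^ 2 := by
    rw [norm_sub_sq_real, real_inner_smul_right, norm_smul]
    simp [hu, sq_abs]
    ring
  nlinarith [norm_nonneg (y - (inner ℝ y u : ℝ) • u), norm_nonneg y,
    sq_nonneg (inner ℝ y u : ℝ)]

end helpers

set_option maxHeartbeats 1000000 in
lemma localKey {p : ℕ} {K : Set (EuclideanSpace ℝ (Fin p))}
    {m : ℝ} (hm : 0 < m) (hmK : ∀ k ∈ K, m ≤ ‖k‖)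
    {x : EuclideanSpace ℝ (Fin p)} (hx : x ∈ K) (hKreg : RegularSet K) :
    ∃ ε > (0:ℝ), ∃ c > (0:ℝ), ∀ k ∈ K, ∀ l ∈ K, dist k x < ε → dist l x < ε →
      ∀ s t : ℝ, 0 ≤ s → 0 ≤ t → |s - t| ≤ c * ‖s • k - t • l‖ := by
  obtain ⟨A, hAK, -, hAmem, α₀, hα₀, hsec⟩ := hKreg x hx
  obtain ⟨r, hr, hrA⟩ := mem_nhdsWithin_iff.mp hAmem
  set α : ℝ := min α₀ 1 with hαdef
  have hα : 0 < α := lt_min hα₀ one_pos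
  have hα1 : α ≤ 1 := min_le_right _ _
  have hxm : m ≤ ‖x‖ := hmK x hx
  have hxpos : 0 < ‖x‖ := lt_of_lt_of_le hm hxm
  set u : EuclideanSpace ℝ (Fin p) := ‖x‖⁻¹ • x with hudef
  have hu : ‖u‖ = 1 := by
    rw [hudef, norm_smul, norm_inv, norm_norm, inv_mul_cancel₀ (ne_of_gt hxpos)]
  have hxu : x = ‖x‖ • u := by
    rw [hudef, smul_smul, mul_inv_cancel₀ (ne_of_gt hxpos), one_smul]
  have hinnerxu : (inner ℝ x u : ℝ) = ‖x‖ := by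
    rw [hudef, real_inner_smul_right, real_inner_self_eq_norm_sq]
    field_simp
  refine ⟨min r (min (α * m / 4) (m / 2)), by positivity, (4 * (α + 1) + α) / (α * m), by positivity,
    ?_⟩
  intro k hk l hl hkx hlx s t hs ht
  set ε : ℝ := min r (min (α * m / 4) (m / 2)) with hεdef
  have hεr : ε ≤ r := min_le_left _ _
  have hεα : ε ≤ α * m / 4 := le_trans (min_le_right _ _) (min_le_left _ _)
  have hεm : ε ≤ m / 2 := le_trans (min_le_right _ _) (min_le_right _ _)
  set N : ℝ := ‖s • k - t • l‖ with hNdef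
  have hN0 : 0 ≤ N := norm_nonneg _
  set c : ℝ := (4 * (α + 1) + α) / (α * m) with hcdef
  have hαm : 0 < α * m := by positivity
  have hcm : 1 / m ≤ c := by
    rw [hcdef, div_le_div_iff₀ hm hαm]
    nlinarith
  by_cases hkl : k = l
  · subst hkl
    have : s • k - t • k = (s - t) • k := by module
    have hNe : N = |s - t| * ‖k‖ := by
      rw [hNdef, this, norm_smul, Real.norm_eq_abs]
    have hmk : m ≤ ‖k‖ := hmK k hk
    have h1 : |s - t| * m ≤ N := by
      rw [hNe]
      exact mul_le_mul_of_nonneg_left hmk (abs_nonneg _)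
    calc |s - t| = (|s - t| * m) * (1/m) := by field_simp
    _ ≤ N * c := by
        apply mul_le_mul h1 hcm (by positivity) hN0
    _ = c * N := mul_comm _ _
  · -- k ≠ l, both in A
    have hkA : k ∈ A := hrA ⟨mem_ball.mpr (lt_of_lt_of_le hkx hεr), hk⟩
    have hlA : l ∈ A := hrA ⟨mem_ball.mpr (lt_of_lt_of_le hlx hεr), hl⟩
    have hklnorm : (0:ℝ) < ‖k - l‖ := by
      rw [norm_pos_iff]; exact sub_ne_zero_of_ne hkl
    set e : EuclideanSpace ℝ (Fin p) := ‖k - l‖⁻¹ • (k - l) with hedef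
    have he : ‖e‖ = 1 := by
      rw [hedef, norm_smul, norm_inv, norm_norm, inv_mul_cancel₀ (ne_of_gt hklnorm)]
    set ce : ℝ := inner ℝ e u with hcedef
    have hce1 : |ce| ≤ 1 := by
      have := abs_real_inner_le_norm e u
      rwa [he, hu, one_mul] at this
    -- Claim: α ≤ ‖e - ce • u‖
    have hPe : α ≤ ‖e - ce • u‖ := by
      rcases lt_trichotomy ce 0 with hc | hc | hc
      · have h2 := hsec l hlA k hkA (Ne.symm hkl) (-ce) (by linarith)
        have heq : ‖l - k‖⁻¹ • (l - k) - (-ce) • (‖x‖⁻¹ • x) = -(e - ce • u) := by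
          rw [norm_sub_rev l k, hedef, hudef]
          module
        rw [heq, norm_neg] at h2
        exact le_of_lt (lt_of_le_of_lt (min_le_left _ _) h2)
      · rw [hc, zero_smul, sub_zero, he]; exact hα1
      · have h2 := hsec k hkA l hlA hkl ce hc
        exact le_of_lt (lt_of_le_of_lt (min_le_left _ _) h2)
    set a : ℝ := s * ‖k - l‖ with hadef
    have ha0 : 0 ≤ a := by positivity
    set b : ℝ := |s - t| with hbdef
    have hb0 : 0 ≤ b := abs_nonneg _
    have hy : s • k - t • l = a • e + (s - t) • l := by
      rw [hadef, hedef, smul_smul, mul_assoc, mul_inv_cancel₀ (ne_of_gt hklnorm), mul_one]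
      module
    set cl : ℝ := (inner ℝ l u : ℝ) with hcldef
    have hlxnorm : ‖l - x‖ < ε := by rwa [dist_eq_norm] at hlx
    have h3 : (inner ℝ l u : ℝ) = inner ℝ (l - x) u + ‖x‖ := by
      rw [inner_sub_left, hinnerxu]; ring
    have h4 : |(inner ℝ (l - x) u : ℝ)| ≤ ‖l - x‖ := by
      have := abs_real_inner_le_norm (l - x) u
      rwa [hu, mul_one] at this
    have hcl : m / 2 ≤ cl := by
      have h5 := (abs_le.mp h4).1
      have : -ε ≤ (inner ℝ (l - x) u : ℝ) := by linarith
      rw [hcldef, h3]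
      linarith
    have hclpos : 0 < cl := lt_of_lt_of_le (by linarith) hcl
    have hyu : (inner ℝ (s • k - t • l) u : ℝ) = a * ce + (s - t) * cl := by
      rw [hy, inner_add_left, real_inner_smul_left e u a, real_inner_smul_left l u (s - t),
        hcedef, hcldef]
    have hPy : (s • k - t • l) - (inner ℝ (s • k - t • l) u : ℝ) • u
        = a • (e - ce • u) + (s - t) • (l - cl • u) := by
      rw [hyu, hy]; module
    have hPl_eq : l - cl • u = (l - x) - (inner ℝ (l - x) u : ℝ) • u := by
      have h6 : (cl : ℝ) • u = (inner ℝ (l - x) u : ℝ) • u + x := by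
        rw [hcldef, h3, add_smul, ← hxu]
      rw [h6]; module
    have hPl : ‖l - cl • u‖ ≤ ε := by
      rw [hPl_eq]
      exact le_trans (proj_le u (l - x) hu) (le_of_lt hlxnorm)
    have hsplit : a • (e - ce • u)
        = ((s • k - t • l) - (inner ℝ (s • k - t • l) u : ℝ) • u) - (s - t) • (l - cl • u) := by
      rw [hPy]; module
    have hbound : ‖a • (e - ce • u)‖ ≤ N + b * ε := by
      rw [hsplit]
      refine le_trans (norm_sub_le _ _) (add_le_add ?_ ?_)
      · exact proj_le u (s • k - t • l) hu
      · rw [norm_smul, Real.norm_eq_abs]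
        exact mul_le_mul_of_nonneg_left hPl hb0
    have h1 : a * α ≤ N + b * ε := by
      refine le_trans ?_ hbound
      rw [norm_smul, Real.norm_eq_abs, abs_of_nonneg ha0]
      exact mul_le_mul_of_nonneg_left hPe ha0
    have hiu : |(inner ℝ (s • k - t • l) u : ℝ)| ≤ N := by
      have := abs_real_inner_le_norm (s • k - t • l) u
      rwa [hu, mul_one] at this
    have h2 : b * cl ≤ N + a := by
      have h5 : (s - t) * cl = (inner ℝ (s • k - t • l) u : ℝ) - a * ce := by
        rw [hyu]; ring
      have h6 : b * cl = |(s - t) * cl| := by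
        rw [abs_mul, abs_of_pos hclpos]
      have h7 : |(s - t) * cl| ≤ |(inner ℝ (s • k - t • l) u : ℝ)| + |a * ce| := by
        rw [h5]; exact abs_sub _ _
      have h8 : |a * ce| ≤ a := by
        rw [abs_mul, abs_of_nonneg ha0]
        nlinarith
      linarith [h6, h7, h8, hiu]
    have hkey : b * (α * m) ≤ 4 * (α + 1) * N := by
      nlinarith [mul_le_mul_of_nonneg_left h2 hα.le, mul_le_mul_of_nonneg_left hεα hb0,
        h1, hN0, hcl, hb0, mul_le_mul_of_nonneg_left hcl hb0,
        mul_le_mul_of_nonneg_left (mul_le_mul_of_nonneg_left hcl hb0) hα.le]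
    have hcval : c * (α * m) = 4 * (α + 1) + α := by
      rw [hcdef]; field_simp
    have hfin : b * (α * m) ≤ (c * N) * (α * m) := by
      nlinarith [hkey, hN0, hα.le, hm.le]
    exact le_of_mul_le_mul_right hfin hαm



lemma farKey {p : ℕ} {K : Set (EuclideanSpace ℝ (Fin p))}
    (hKc : IsCompact K) (hK0 : (0 : EuclideanSpace ℝ (Fin p)) ∉ K) (hKray : RayUnique K)
    {δ : ℝ} (hδ : 0 < δ) :
    ∃ c > (0:ℝ), ∀ k ∈ K, ∀ l ∈ K, δ ≤ ‖k - l‖ →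
      ∀ s t : ℝ, 0 ≤ s → 0 ≤ t → |s - t| ≤ c * ‖s • k - t • l‖ := by
  classical
  set S : Set ((EuclideanSpace ℝ (Fin p) × EuclideanSpace ℝ (Fin p)) × ℝ) :=
    ((K ×ˢ K) ∩ {w : EuclideanSpace ℝ (Fin p) × EuclideanSpace ℝ (Fin p) | δ ≤ ‖w.1 - w.2‖}) ×ˢ (Icc (0:ℝ) 1) with hSdef
  have hScomp : IsCompact S := by
    refine IsCompact.prod (IsCompact.inter_right (hKc.prod hKc) ?_) isCompact_Icc
    exact isClosed_le continuous_const ((continuous_fst.sub continuous_snd).norm)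
  have hFcont : Continuous fun z : (EuclideanSpace ℝ (Fin p) × EuclideanSpace ℝ (Fin p)) × ℝ => ‖z.2 • z.1.1 - (1 - z.2) • z.1.2‖ := by
    fun_prop
  have hpos : ∃ c₀ > (0:ℝ), ∀ k ∈ K, ∀ l ∈ K, δ ≤ ‖k - l‖ →
      ∀ s ∈ Icc (0:ℝ) 1, c₀ ≤ ‖s • k - (1 - s) • l‖ := by
    by_cases hS : S.Nonempty
    · obtain ⟨z₀, hz₀S, hmin⟩ := hScomp.exists_isMinOn hS hFcont.continuousOn
      obtain ⟨⟨⟨hk₀, hl₀⟩, hd₀⟩, hs₀⟩ := hz₀S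
      set k₀ := z₀.1.1; set l₀ := z₀.1.2; set s₀ := z₀.2
      refine ⟨‖s₀ • k₀ - (1 - s₀) • l₀‖, ?_, ?_⟩
      · rcases lt_or_eq_of_le (norm_nonneg (s₀ • k₀ - (1 - s₀) • l₀)) with h | h
        · exact h
        · exfalso
          have heq : s₀ • k₀ = (1 - s₀) • l₀ := by
            have := (norm_eq_zero.mp h.symm)
            have := sub_eq_zero.mp this
            exact this
          rcases eq_or_lt_of_le hs₀.1 with h0 | h0
          · -- s₀ = 0
            have : (0:EuclideanSpace ℝ (Fin p)) = l₀ := by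
              have := heq
              rw [← h0, zero_smul, sub_zero, one_smul] at this
              exact this
            exact hK0 (this ▸ hl₀)
          rcases eq_or_lt_of_le hs₀.2 with h1 | h1
          · -- s₀ = 1
            have : k₀ = (0:EuclideanSpace ℝ (Fin p)) := by
              have := heq
              rw [h1, sub_self, zero_smul, one_smul] at this
              exact this
            exact hK0 (this ▸ hk₀)
          · -- 0 < s₀ < 1
            have h1s : (0:ℝ) < 1 - s₀ := by linarith
            have hl₀eq : l₀ = (s₀ / (1 - s₀)) • k₀ := by
              rw [div_eq_mul_inv, mul_comm, ← smul_smul, heq, smul_smul,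
                inv_mul_cancel₀ (ne_of_gt h1s), one_smul]
            have hlk := hKray k₀ hk₀ l₀ hl₀ (s₀ / (1 - s₀)) (by positivity) hl₀eq
            have hd' : δ ≤ ‖k₀ - l₀‖ := hd₀
            rw [hlk, sub_self, norm_zero] at hd'
            linarith
      · intro k hk l hl hkl s hs
        exact hmin (a := ((k, l), s)) ⟨⟨⟨hk, hl⟩, hkl⟩, hs⟩
    · refine ⟨1, one_pos, ?_⟩
      intro k hk l hl hkl s hs
      exact absurd ⟨((k, l), s), ⟨⟨⟨hk, hl⟩, hkl⟩, hs⟩⟩ hS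
  obtain ⟨c₀, hc₀, hc₀b⟩ := hpos
  refine ⟨1 / c₀, by positivity, ?_⟩
  intro k hk l hl hkl s t hs ht
  by_cases hst : s + t = 0
  · have hs0 : s = 0 := by linarith
    have ht0 : t = 0 := by linarith
    simp [hs0, ht0]
  · have hu : 0 < s + t := lt_of_le_of_ne (by linarith) (Ne.symm hst)
    set v := s + t with hvdef
    have hs' : s / v ∈ Icc (0:ℝ) 1 := ⟨by positivity, by rw [div_le_one hu]; linarith⟩
    have hrepr : s • k - t • l = v • ((s / v) • k - (1 - s / v) • l) := by
      have h1 : v * (s / v) = s := by field_simp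
      have h2 : v * (1 - s / v) = t := by field_simp; ring
      rw [smul_sub, smul_smul, smul_smul, h1, h2]
    have hnorm : ‖s • k - t • l‖ = v * ‖(s / v) • k - (1 - s / v) • l‖ := by
      rw [hrepr, norm_smul, Real.norm_eq_abs, abs_of_pos hu]
    have hlow : c₀ ≤ ‖(s / v) • k - (1 - s / v) • l‖ := hc₀b k hk l hl hkl _ hs'
    have habs : |s - t| ≤ v := by
      rw [abs_le]; constructor <;> [linarith; linarith]
    rw [hnorm, div_mul_eq_mul_div, le_div_iff₀ hc₀]
    nlinarith [mul_le_mul_of_nonneg_right habs hc₀.le,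
      mul_le_mul_of_nonneg_left hlow hu.le]


lemma globalKey {p : ℕ} {K : Set (EuclideanSpace ℝ (Fin p))}
    (hKc : IsCompact K) (hK0 : (0 : EuclideanSpace ℝ (Fin p)) ∉ K) (hKray : RayUnique K)
    (hKreg : RegularSet K) :
    ∃ c ≥ (0:ℝ), ∀ k ∈ K, ∀ l ∈ K, ∀ s t : ℝ, 0 ≤ s → 0 ≤ t →
      |s - t| ≤ c * ‖s • k - t • l‖ := by
  classical
  rcases K.eq_empty_or_nonempty with hKe | hKne
  · exact ⟨1, by norm_num, by simp [hKe]⟩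
  -- lower bound on norms
  obtain ⟨m, hm, hmball⟩ := Metric.isOpen_iff.mp hKc.isClosed.isOpen_compl 0 hK0
  have hmK : ∀ k ∈ K, m ≤ ‖k‖ := by
    intro k hk
    by_contra h
    push_neg at h
    exact (hmball (by simpa [mem_ball, dist_zero_right] using h)) hk
  have hloc : ∀ x (hx : x ∈ K), ∃ ε > (0:ℝ), ∃ c > (0:ℝ),
      ∀ k ∈ K, ∀ l ∈ K, dist k x < ε → dist l x < ε →
        ∀ s t : ℝ, 0 ≤ s → 0 ≤ t → |s - t| ≤ c * ‖s • k - t • l‖ :=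
    fun x hx => localKey hm hmK hx hKreg
  choose! εf hεf cf hcf hP using hloc
  obtain ⟨T, hTsub⟩ := hKc.elim_nhds_subcover' (fun x hx => Metric.ball x (εf x / 2))
    (fun x hx => Metric.ball_mem_nhds _ (by have := hεf x hx; positivity))
  have hTne : T.Nonempty := by
    obtain ⟨x₀, hx₀⟩ := hKne
    obtain ⟨z, hz, -⟩ := Set.mem_iUnion₂.mp (hTsub hx₀)
    exact ⟨z, hz⟩
  set δ : ℝ := T.inf' hTne (fun z => εf z.1 / 2) with hδdef
  have hδpos : 0 < δ := by
    rw [hδdef, Finset.lt_inf'_iff]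
    intro z hz
    have := hεf z.1 z.2
    positivity
  set cmax : ℝ := T.sup' hTne (fun z => cf z.1) with hcmaxdef
  obtain ⟨cfar, hcfar, hfar⟩ := farKey hKc hK0 hKray hδpos
  refine ⟨max cmax cfar, le_trans hcfar.le (le_max_right _ _), ?_⟩
  intro k hk l hl s t hs ht
  have hN0 : (0:ℝ) ≤ ‖s • k - t • l‖ := norm_nonneg _
  by_cases hdist : ‖k - l‖ < δ
  · obtain ⟨z, hzT, hkz⟩ := Set.mem_iUnion₂.mp (hTsub hk)
    have hδle : δ ≤ εf z.1 / 2 := Finset.inf'_le _ hzT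
    have hkz' : dist k z.1 < εf z.1 / 2 := mem_ball.mp hkz
    have hlz : dist l z.1 < εf z.1 := by
      calc dist l z.1 ≤ dist l k + dist k z.1 := dist_triangle _ _ _
      _ < δ + εf z.1 / 2 := by
          rw [dist_comm l k, dist_eq_norm]
          exact add_lt_add_of_lt_of_le hdist hkz'.le
      _ ≤ εf z.1 := by linarith
    have h1 := hP z.1 z.2 k hk l hl (lt_of_lt_of_le hkz' (by linarith)) hlz s t hs ht
    have h2 : cf z.1 ≤ max cmax cfar :=
      le_trans (Finset.le_sup' (fun z => cf z.1) hzT) (le_max_left _ _)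
    exact le_trans h1 (mul_le_mul_of_nonneg_right h2 hN0)
  · push_neg at hdist
    have h1 := hfar k hk l hl hdist s t hs ht
    exact le_trans h1 (mul_le_mul_of_nonneg_right (le_max_right _ _) hN0)


lemma coneEst {E F : Type*} [NormedAddCommGroup E] [NormedSpace ℝ E]
    [NormedAddCommGroup F] [NormedSpace ℝ F]
    {a b : E} {a' b' : F} {s t lam c MA' MB : ℝ}
    (hs : 0 ≤ s) (hlam : 0 ≤ lam)
    (hab : ‖a - b‖ ≤ lam * ‖a' - b'‖) (hMB : ‖b‖ ≤ MB)
    (hMA' : ‖b'‖ ≤ MA') (hMA'0 : 0 ≤ MA')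
    (hst : |s - t| ≤ c * ‖s • a' - t • b'‖) :
    ‖s • a - t • b‖ ≤ (lam + (lam * MA' + MB) * c) * ‖s • a' - t • b'‖ := by
  have hMB0 : 0 ≤ MB := le_trans (norm_nonneg _) hMB
  have hN0 : (0:ℝ) ≤ ‖s • a' - t • b'‖ := norm_nonneg _
  have h1 : ‖s • a - t • b‖ ≤ s * ‖a - b‖ + |s - t| * ‖b‖ := by
    have hid : s • a - t • b = s • (a - b) + (s - t) • b := by module
    rw [hid]
    refine le_trans (norm_add_le _ _) ?_
    rw [norm_smul, norm_smul, Real.norm_eq_abs, Real.norm_eq_abs, abs_of_nonneg hs]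
  have h4 : s * ‖a' - b'‖ ≤ ‖s • a' - t • b'‖ + |s - t| * MA' := by
    have hid : s • (a' - b') = (s • a' - t • b') + (t - s) • b' := by module
    have h5 : s * ‖a' - b'‖ = ‖s • (a' - b')‖ := by
      rw [norm_smul, Real.norm_eq_abs, abs_of_nonneg hs]
    rw [h5, hid]
    refine le_trans (norm_add_le _ _) ?_
    rw [norm_smul, Real.norm_eq_abs, abs_sub_comm t s]
    exact add_le_add le_rfl (mul_le_mul_of_nonneg_left hMA' (abs_nonneg _))
  nlinarith [mul_le_mul_of_nonneg_left hab hs, mul_le_mul_of_nonneg_left h4 hlam,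
    mul_le_mul_of_nonneg_left hst (by positivity : (0:ℝ) ≤ lam * MA' + MB),
    mul_le_mul_of_nonneg_left hMB (abs_nonneg (s - t)), h1, hN0, abs_nonneg (s - t)]

/-- a Lipschitz map `f : K → L` of compact sets missing the origin and meeting
each ray at most once, with `K` regular, induces a Lipschitz map
`f' : OpenCone(K) → OpenCone(L)`, `f'(t·k) = t·f(k)`; if moreover `L` is regular and `f` is a
bi-Lipschitz homeomorphism onto `L`, then `f'` is a bi-Lipschitz homeomorphism onto the cone. -/
theorem stmt_7 {p q : ℕ}
    (K : Set (EuclideanSpace ℝ (Fin p))) (L : Set (EuclideanSpace ℝ (Fin q)))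
    (hKc : IsCompact K) (hK0 : (0 : EuclideanSpace ℝ (Fin p)) ∉ K) (hKray : RayUnique K)
    (hLc : IsCompact L) (hL0 : (0 : EuclideanSpace ℝ (Fin q)) ∉ L) (hLray : RayUnique L)
    (hKreg : RegularSet K)
    (f : EuclideanSpace ℝ (Fin p) → EuclideanSpace ℝ (Fin q))
    (hfK : Set.MapsTo f K L)
    (hfLip : ∃ lam : ℝ, 0 ≤ lam ∧ ∀ v ∈ K, ∀ w ∈ K, ‖f v - f w‖ ≤ lam * ‖v - w‖) :
    ∃ g : EuclideanSpace ℝ (Fin p) → EuclideanSpace ℝ (Fin q),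
      (∀ t : ℝ, 0 ≤ t → ∀ k ∈ K, g (t • k) = t • f k) ∧
      (∃ lam : ℝ, 0 ≤ lam ∧
        ∀ x ∈ OpenCone K, ∀ y ∈ OpenCone K, ‖g x - g y‖ ≤ lam * ‖x - y‖) ∧
      ((RegularSet L ∧ Set.BijOn f K L ∧
          (∃ mu : ℝ, 0 ≤ mu ∧ ∀ v ∈ K, ∀ w ∈ K, ‖v - w‖ ≤ mu * ‖f v - f w‖)) →
        (Set.BijOn g (OpenCone K) (OpenCone L) ∧
          ∃ mu : ℝ, 0 ≤ mu ∧
            ∀ x ∈ OpenCone K, ∀ y ∈ OpenCone K, ‖x - y‖ ≤ mu * ‖g x - g y‖)) := by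
  classical
  obtain ⟨lam, hlam0, hlam⟩ := hfLip
  -- well-definedness of the cone extension
  have hwd : ∀ t₁ : ℝ, 0 ≤ t₁ → ∀ k₁ ∈ K, ∀ t₂ : ℝ, 0 ≤ t₂ → ∀ k₂ ∈ K,
      t₁ • k₁ = t₂ • k₂ → t₁ • f k₁ = t₂ • f k₂ := by
    intro t₁ ht₁ k₁ hk₁ t₂ ht₂ k₂ hk₂ heq
    have hk₁0 : k₁ ≠ 0 := fun h => hK0 (h ▸ hk₁)
    have hk₂0 : k₂ ≠ 0 := fun h => hK0 (h ▸ hk₂)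
    rcases eq_or_lt_of_le ht₁ with h1 | h1
    · have h0 : t₂ • k₂ = 0 := by rw [← heq, ← h1, zero_smul]
      have ht₂0 : t₂ = 0 := by
        rcases smul_eq_zero.mp h0 with h | h
        · exact h
        · exact absurd h hk₂0
      rw [← h1, ht₂0, zero_smul, zero_smul]
    rcases eq_or_lt_of_le ht₂ with h2 | h2
    · have h0 : t₁ • k₁ = 0 := by rw [heq, ← h2, zero_smul]
      rcases smul_eq_zero.mp h0 with h | h
      · exact absurd h h1.ne'
      · exact absurd h hk₁0
    · have hk₂eq : k₂ = (t₁ / t₂) • k₁ := by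
        rw [div_eq_mul_inv, mul_comm, ← smul_smul, heq, smul_smul,
          inv_mul_cancel₀ h2.ne', one_smul]
      have hkk : k₂ = k₁ := hKray k₁ hk₁ k₂ hk₂ (t₁ / t₂) (by positivity) hk₂eq
      rw [hkk] at heq ⊢
      have htt : t₁ = t₂ := by
        have h3 : (t₁ - t₂) • k₁ = 0 := by rw [sub_smul, heq, sub_self]
        rcases smul_eq_zero.mp h3 with h | h
        · linarith [sub_eq_zero.mp h]
        · exact absurd h hk₁0
      rw [htt]
  set g : EuclideanSpace ℝ (Fin p) → EuclideanSpace ℝ (Fin q) :=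
    fun x => if h : x ∈ OpenCone K then h.choose • f h.choose_spec.2.choose else 0 with hg
  have hrep : ∀ t : ℝ, 0 ≤ t → ∀ k ∈ K, g (t • k) = t • f k := by
    intro t ht k hk
    have hmem : t • k ∈ OpenCone K := ⟨t, ht, k, hk, rfl⟩
    have : g (t • k) = hmem.choose • f hmem.choose_spec.2.choose := by
      rw [hg]; exact dif_pos hmem
    rw [this]
    exact hwd hmem.choose hmem.choose_spec.1 hmem.choose_spec.2.choose
      hmem.choose_spec.2.choose_spec.1 t ht k hk hmem.choose_spec.2.choose_spec.2.symm
  -- bounds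
  obtain ⟨MK0, hMK0⟩ := isBounded_iff_forall_norm_le.mp hKc.isBounded
  obtain ⟨ML0, hML0⟩ := isBounded_iff_forall_norm_le.mp hLc.isBounded
  set MK : ℝ := max MK0 0 with hMKdef
  set ML : ℝ := max ML0 0 with hMLdef
  have hMK : ∀ k ∈ K, ‖k‖ ≤ MK := fun k hk => le_trans (hMK0 k hk) (le_max_left _ _)
  have hML : ∀ l ∈ L, ‖l‖ ≤ ML := fun l hl => le_trans (hML0 l hl) (le_max_left _ _)
  have hMKnn : (0:ℝ) ≤ MK := le_max_right _ _
  have hMLnn : (0:ℝ) ≤ ML := le_max_right _ _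
  obtain ⟨cK, hcK0, hcK⟩ := globalKey hKc hK0 hKray hKreg
  refine ⟨g, hrep, ?_, ?_⟩
  · -- forward Lipschitz
    refine ⟨lam + (lam * MK + ML) * cK,
      add_nonneg hlam0 (mul_nonneg (add_nonneg (mul_nonneg hlam0 hMKnn) hMLnn) hcK0), ?_⟩
    rintro x ⟨s, hs, k, hk, rfl⟩ y ⟨t, ht, l, hl, rfl⟩
    rw [hrep s hs k hk, hrep t ht l hl]
    exact coneEst hs hlam0 (hlam k hk l hl) (hML (f l) (hfK hl)) (hMK l hl) hMKnn
      (hcK k hk l hl s t hs ht)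
  · rintro ⟨hLreg, hfbij, mu, hmu0, hmu⟩
    obtain ⟨cL, hcL0, hcL⟩ := globalKey hLc hL0 hLray hLreg
    constructor
    · refine ⟨?_, ?_, ?_⟩
      · rintro x ⟨s, hs, k, hk, rfl⟩
        rw [hrep s hs k hk]
        exact ⟨s, hs, f k, hfK hk, rfl⟩
      · rintro x ⟨s, hs, k, hk, rfl⟩ y ⟨t, ht, l, hl, rfl⟩ hxy
        rw [hrep s hs k hk, hrep t ht l hl] at hxy
        have hfk0 : f k ≠ 0 := fun h => hL0 (h ▸ hfK hk)
        have hfl0 : f l ≠ 0 := fun h => hL0 (h ▸ hfK hl)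
        rcases eq_or_lt_of_le hs with h1 | h1
        · have h0 : t • f l = 0 := by rw [← hxy, ← h1, zero_smul]
          have ht0 : t = 0 := by
            rcases smul_eq_zero.mp h0 with h | h
            · exact h
            · exact absurd h hfl0
          rw [← h1, ht0, zero_smul, zero_smul]
        rcases eq_or_lt_of_le ht with h2 | h2
        · have h0 : s • f k = 0 := by rw [hxy, ← h2, zero_smul]
          rcases smul_eq_zero.mp h0 with h | h
          · exact absurd h h1.ne'
          · exact absurd h hfk0
        · have hfleq : f l = (s / t) • f k := by
            rw [div_eq_mul_inv, mul_comm, ← smul_smul, hxy, smul_smul,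
              inv_mul_cancel₀ h2.ne', one_smul]
          have hff : f l = f k := hLray (f k) (hfK hk) (f l) (hfK hl) (s / t)
            (by positivity) hfleq
          have hlk : l = k := hfbij.injOn hl hk hff
          rw [hff] at hxy
          have hst : s = t := by
            have h3 : (s - t) • f k = 0 := by rw [sub_smul, hxy, sub_self]
            rcases smul_eq_zero.mp h3 with h | h
            · linarith [sub_eq_zero.mp h]
            · exact absurd h hfk0
          rw [hlk, hst]
      · rintro y ⟨t, ht, l', hl', rfl⟩
        obtain ⟨k, hk, hfkl⟩ := hfbij.surjOn hl'
        refine ⟨t • k, ⟨t, ht, k, hk, rfl⟩, ?_⟩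
        rw [hrep t ht k hk, hfkl]
    · refine ⟨mu + (mu * ML + MK) * cL,
        add_nonneg hmu0 (mul_nonneg (add_nonneg (mul_nonneg hmu0 hMLnn) hMKnn) hcL0), ?_⟩
      rintro x ⟨s, hs, k, hk, rfl⟩ y ⟨t, ht, l, hl, rfl⟩
      rw [hrep s hs k hk, hrep t ht l hl]
      exact coneEst hs hmu0 (hmu k hk l hl) (hMK l hl) (hML (f l) (hfK hl)) hMLnn
        (hcL (f k) (hfK hk) (f l) (hfK hl) s t hs ht)
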